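/- arXiv:2402.06048 — 2 statements merged into one kernel-verified Lean document; each statement's English description precedes it below -/
import Mathlib

section
/- Proximal mapping of the ℓ∞-norm: let f ∈ ℝ^m and η > 0, let D = {u ∈ ℝ^m : ‖u‖₁ ≤ η} be the closed ℓ1-ball of radius η, and let P_D(f) denote the (unique) Euclidean projection of f onto D. Then f − P_D(f) is the unique minimizer over u ∈ ℝ^m of (1/2)‖f − u‖₂² + η‖u‖∞. -/
set_option maxHeartbeats 800000

open Finset

lemma sign_mul_self' (x : ℝ) : Real.sign x * x = |x| := by
  rcases lt_trichotomy x 0 with h | h | h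
  · rw [Real.sign_of_neg h, abs_of_neg h]; ring
  · simp [h]
  · rw [Real.sign_of_pos h, abs_of_pos h]; ring

lemma abs_sign_le_one (x : ℝ) : |Real.sign x| ≤ 1 := by
  rcases lt_trichotomy x 0 with h | h | h
  · simp [Real.sign_of_neg h]
  · simp [h]
  · simp [Real.sign_of_pos h]

/-- **proximal map of the ℓ∞-norm.** Let `D` be the closed ℓ1-ball of radius
`η > 0` and `p = P_D(f)` the Euclidean projection of `f` onto `D`. Then `f − p` is the
unique minimizer of `u ↦ (1/2)‖f − u‖₂² + η ‖u‖∞`. -/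
theorem prox_linf_eq_sub_proj_l1ball {m : ℕ} (f : EuclideanSpace ℝ (Fin m))
    (η : ℝ) (hη : 0 < η) (p : EuclideanSpace ℝ (Fin m))
    (hpD : ∑ i, |p i| ≤ η)
    (hproj : ∀ v : EuclideanSpace ℝ (Fin m), (∑ i, |v i| ≤ η) → ‖f - p‖ ≤ ‖f - v‖) :
    let cost : EuclideanSpace ℝ (Fin m) → ℝ :=
      fun u => 1 / 2 * ‖f - u‖ ^ 2 + η * (⨆ i : Fin m, |u i|)
    ∀ u : EuclideanSpace ℝ (Fin m),
      cost (f - p) ≤ cost u ∧ (cost u = cost (f - p) → u = f - p) := by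
  intro cost u
  have hcost : ∀ w, cost w = 1 / 2 * ‖f - w‖ ^ 2 + η * (⨆ i : Fin m, |w i|) := fun w => rfl
  clear_value cost
  set q : EuclideanSpace ℝ (Fin m) := f - p with hq
  have hfq : f - q = p := by rw [hq]; abel
  clear_value q
  -- support function bound
  have hsupnn : ∀ w : EuclideanSpace ℝ (Fin m), (0 : ℝ) ≤ ⨆ i : Fin m, |w i| :=
    fun w => Real.iSup_nonneg fun i => abs_nonneg _
  have hle_sup : ∀ (w : EuclideanSpace ℝ (Fin m)) (i : Fin m),
      |w i| ≤ ⨆ j : Fin m, |w j| :=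
    fun w i => le_ciSup (f := fun j : Fin m => |w j|) (Set.Finite.bddAbove (Set.finite_range _)) i
  have ha : ∀ v w : EuclideanSpace ℝ (Fin m), (∑ i, |v i| ≤ η) →
      (inner ℝ v w : ℝ) ≤ η * (⨆ i : Fin m, |w i|) := by
    intro v w hv
    have h1 : (inner ℝ v w : ℝ) = ∑ i, v i * w i := by
      simp [PiLp.inner_apply, mul_comm]
    rw [h1]
    calc ∑ i, v i * w i ≤ ∑ i, |v i| * (⨆ j : Fin m, |w j|) := by
          apply Finset.sum_le_sum
          intro i _
          calc v i * w i ≤ |v i * w i| := le_abs_self _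
            _ = |v i| * |w i| := abs_mul _ _
            _ ≤ |v i| * (⨆ j : Fin m, |w j|) := by
                exact mul_le_mul_of_nonneg_left (hle_sup w i) (abs_nonneg _)
      _ = (∑ i, |v i|) * (⨆ j : Fin m, |w j|) := by rw [Finset.sum_mul]
      _ ≤ η * (⨆ j : Fin m, |w j|) := mul_le_mul_of_nonneg_right hv (hsupnn w)
  -- convexity of the l1 ball
  have hconv : Convex ℝ {v : EuclideanSpace ℝ (Fin m) | ∑ i, |v i| ≤ η} := by
    intro x hx y hy a b hab hbb habs
    simp only [Set.mem_setOf_eq] at *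
    calc ∑ i, |(a • x + b • y) i| ≤ ∑ i, (a * |x i| + b * |y i|) := by
          apply Finset.sum_le_sum
          intro i _
          have : (a • x + b • y) i = a * x i + b * y i := rfl
          rw [this]
          calc |a * x i + b * y i| ≤ |a * x i| + |b * y i| := abs_add_le _ _
            _ = a * |x i| + b * |y i| := by
                rw [abs_mul, abs_mul, abs_of_nonneg hab, abs_of_nonneg hbb]
      _ = a * ∑ i, |x i| + b * ∑ i, |y i| := by
          rw [Finset.sum_add_distrib, Finset.mul_sum, Finset.mul_sum]
      _ ≤ a * η + b * η := by
          exact add_le_add (mul_le_mul_of_nonneg_left hx hab)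
            (mul_le_mul_of_nonneg_left hy hbb)
      _ = η := by rw [← add_mul, habs, one_mul]
  -- variational inequality
  haveI : Nonempty ↑{v : EuclideanSpace ℝ (Fin m) | ∑ i, |v i| ≤ η} := ⟨⟨p, hpD⟩⟩
  have hinf : ‖f - p‖ = ⨅ w : {v : EuclideanSpace ℝ (Fin m) | ∑ i, |v i| ≤ η}, ‖f - w‖ := by
    rw [← hq]
    apply le_antisymm
    · exact le_ciInf fun w => hproj w w.2
    · have hbdd : BddBelow (Set.range fun w : {v : EuclideanSpace ℝ (Fin m) | ∑ i, |v i| ≤ η} => ‖f - (w : EuclideanSpace ℝ (Fin m))‖) := by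
        refine ⟨0, ?_⟩
        rintro x ⟨w, rfl⟩
        exact norm_nonneg _
      rw [hq]
      exact ciInf_le hbdd ⟨p, hpD⟩
  have hVI : ∀ w : EuclideanSpace ℝ (Fin m), (∑ i, |w i| ≤ η) →
      (inner ℝ q w : ℝ) ≤ (inner ℝ q p : ℝ) := by
    intro w hw
    have := (norm_eq_iInf_iff_real_inner_le_zero hconv hpD).mp hinf w hw
    have h2 : (inner ℝ (f - p) (w - p) : ℝ) = inner ℝ q w - inner ℝ q p := by
      rw [← hq, inner_sub_right]
    linarith [h2 ▸ this]
  -- (b): η * sup |q i| ≤ ⟪q, p⟫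
  have hb : η * (⨆ i : Fin m, |q i|) ≤ (inner ℝ q p : ℝ) := by
    cases isEmpty_or_nonempty (Fin m) with
    | inl h =>
        have h0 : (⨆ i : Fin m, |q i|) = 0 := Real.iSup_of_isEmpty _
        rw [h0, mul_zero]
        simpa using hVI 0 (by simp [hη.le])
    | inr h =>
        obtain ⟨j, hj⟩ := Finite.exists_max fun i : Fin m => |q i|
        have hsup : (⨆ i : Fin m, |q i|) = |q j| :=
          le_antisymm (ciSup_le hj) (hle_sup q j)
        set w : EuclideanSpace ℝ (Fin m) :=
          EuclideanSpace.single j (η * Real.sign (q j)) with hw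
        have hwD : ∑ i, |w i| ≤ η := by
          have : ∑ i, |w i| = |η * Real.sign (q j)| := by
            rw [hw]
            simp [EuclideanSpace.single_apply, apply_ite abs, Finset.sum_ite_eq]
          rw [this, abs_mul, abs_of_pos hη]
          calc η * |Real.sign (q j)| ≤ η * 1 :=
                mul_le_mul_of_nonneg_left (abs_sign_le_one _) hη.le
            _ = η := mul_one η
        have hiw : (inner ℝ q w : ℝ) = η * |q j| := by
          rw [hw]
          have : (inner ℝ q (EuclideanSpace.single j (η * Real.sign (q j))) : ℝ)
              = q j * (η * Real.sign (q j)) := by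
            simp [PiLp.inner_apply, EuclideanSpace.single_apply, mul_ite,
              Finset.sum_ite_eq]
            ring
          rw [this, ← sign_mul_self' (q j)]
          ring
        rw [hsup, ← hiw]
        exact hVI w hwD
  -- key strong-convexity inequality
  have hAu : (inner ℝ p u : ℝ) ≤ η * (⨆ i : Fin m, |u i|) := ha p u hpD
  have hexp : ‖f - u‖ ^ 2 = ‖p‖ ^ 2 - 2 * ((inner ℝ p u : ℝ) - inner ℝ p q) + ‖u - q‖ ^ 2 := by
    have h1 : f - u = p - (u - q) := by rw [← hfq]; abel
    rw [h1, norm_sub_sq_real, inner_sub_right]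
  have hpq : (inner ℝ q p : ℝ) = inner ℝ p q := real_inner_comm _ _
  have hfqnorm : ‖f - q‖ = ‖p‖ := by rw [hfq]
  have key : cost q + 1 / 2 * ‖u - q‖ ^ 2 ≤ cost u := by
    rw [hcost, hcost, hfqnorm]
    nlinarith [hb, hAu, hexp, hpq]
  constructor
  · nlinarith [key, sq_nonneg ‖u - q‖]
  · intro heq
    have h0 : ‖u - q‖ ^ 2 ≤ 0 := by nlinarith [key]
    have h1 : ‖u - q‖ = 0 := by nlinarith [sq_nonneg ‖u - q‖, norm_nonneg (u - q)]
    have := norm_eq_zero.mp h1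
    rw [sub_eq_zero] at this
    exact this
end

section
/- Nearest matrix with eigenvalues bounded below, in Frobenius norm: let A ∈ ℝ^{n×n} be symmetric with eigendecomposition A = E L Eᵀ, where E is orthogonal and L is diagonal, and let ε ∈ ℝ. Define A⁺ = E L⁺ Eᵀ where L⁺ is diagonal with L⁺_{ii} = max(ε, L_{ii}). Then for every symmetric matrix B ∈ ℝ^{n×n} with B − εI positive semidefinite, ‖A − A⁺‖_F ≤ ‖A − B‖_F. -/
open Matrix

lemma frob_sq_eq_trace {n : ℕ} (X : Matrix (Fin n) (Fin n) ℝ) :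
    ∑ i, ∑ j, (X i j) ^ 2 = trace (Xᵀ * X) := by
  rw [Finset.sum_comm]
  simp [trace, mul_apply, diag, sq]

lemma frob_conj {n : ℕ} (E : Matrix (Fin n) (Fin n) ℝ) (hE : Eᵀ * E = 1)
    (C : Matrix (Fin n) (Fin n) ℝ) :
    ∑ i, ∑ j, ((E * C * Eᵀ) i j) ^ 2 = ∑ i, ∑ j, (C i j) ^ 2 := by
  have hE' : E * Eᵀ = 1 := mul_eq_one_comm.mp hE
  rw [frob_sq_eq_trace, frob_sq_eq_trace]
  have : (E * C * Eᵀ)ᵀ * (E * C * Eᵀ) = E * (Cᵀ * C) * Eᵀ := by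
    have h1 : ∀ X : Matrix (Fin n) (Fin n) ℝ, Eᵀ * (E * X) = X := fun X => by
      rw [← Matrix.mul_assoc, hE, Matrix.one_mul]
    simp only [transpose_mul, transpose_transpose, Matrix.mul_assoc, h1]
  rw [this, Matrix.trace_mul_cycle, ← Matrix.mul_assoc, hE, Matrix.one_mul]

/-- **nearest matrix with eigenvalues bounded below, Frobenius norm.**
Let `A = E L Eᵀ` be symmetric with `E` orthogonal and `L = diagonal d`, and let
`A⁺ = E L⁺ Eᵀ` where `L⁺ = diagonal (fun i => max ε (d i))`. Then for every symmetric `B`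
with `B − εI` positive semidefinite, `‖A − A⁺‖_F ≤ ‖A − B‖_F`. -/
theorem nearest_eigenvalue_clipped_matrix {n : ℕ} (E : Matrix (Fin n) (Fin n) ℝ)
    (hE : Eᵀ * E = 1) (d : Fin n → ℝ) (ε : ℝ)
    (A : Matrix (Fin n) (Fin n) ℝ) (hA : A = E * diagonal d * Eᵀ)
    (B : Matrix (Fin n) (Fin n) ℝ) (hBsymm : Bᵀ = B)
    (hB : (B - ε • (1 : Matrix (Fin n) (Fin n) ℝ)).PosSemidef) :
    Real.sqrt (∑ i, ∑ j, ((A - E * diagonal (fun i => max ε (d i)) * Eᵀ) i j) ^ 2) ≤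
      Real.sqrt (∑ i, ∑ j, ((A - B) i j) ^ 2) := by
  have hE' : E * Eᵀ = 1 := mul_eq_one_comm.mp hE
  set M : Matrix (Fin n) (Fin n) ℝ := Eᵀ * B * E with hM
  -- diagonal entries of M are ≥ ε
  have hNpsd : (Eᵀ * (B - ε • (1 : Matrix (Fin n) (Fin n) ℝ)) * E).PosSemidef := by
    have := hB.mul_mul_conjTranspose_same Eᵀ
    simpa [Matrix.conjTranspose_eq_transpose_of_trivial, transpose_transpose] using this
  have hNM : Eᵀ * (B - ε • (1 : Matrix (Fin n) (Fin n) ℝ)) * E = M - ε • 1 := by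
    rw [hM]
    rw [Matrix.mul_sub, Matrix.sub_mul]
    congr 1
    rw [Matrix.mul_smul, Matrix.smul_mul, Matrix.mul_one, hE]
  have hdiag : ∀ i, ε ≤ M i i := by
    intro i
    have h := hNpsd.dotProduct_mulVec_nonneg (Pi.single i 1)
    rw [hNM] at h
    have : ((M - ε • (1 : Matrix (Fin n) (Fin n) ℝ)) *ᵥ Pi.single i 1) i = M i i - ε := by
      simp [mulVec, dotProduct, Pi.single_apply, Matrix.sub_apply, one_apply]
    simp only [dotProduct, star_trivial, Pi.single_apply] at h
    simp [mulVec, dotProduct, Pi.single_apply, Matrix.sub_apply, one_apply,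
      Finset.sum_ite_eq'] at h
    linarith
  -- rewrite both sides
  have hAB : A - B = E * (diagonal d - M) * Eᵀ := by
    rw [hA, hM, Matrix.mul_sub, Matrix.sub_mul]
    congr 1
    simp only [Matrix.mul_assoc]
    rw [hE', Matrix.mul_one, ← Matrix.mul_assoc, hE', Matrix.one_mul]
  have hAA : A - E * diagonal (fun i => max ε (d i)) * Eᵀ
      = E * (diagonal (fun i => d i - max ε (d i))) * Eᵀ := by
    rw [hA, ← Matrix.sub_mul, ← Matrix.mul_sub, ← diagonal_sub]
  apply Real.sqrt_le_sqrt
  rw [hAB, hAA, frob_conj E hE, frob_conj E hE]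
  -- now pure sum inequality
  have key : ∀ i : Fin n,
      ∑ j, ((diagonal (fun i => d i - max ε (d i))) i j) ^ 2
        ≤ ∑ j, ((diagonal d - M) i j) ^ 2 := by
    intro i
    have h1 : ∑ j, ((diagonal (fun i => d i - max ε (d i))) i j) ^ 2
        = (d i - max ε (d i)) ^ 2 := by
      rw [Finset.sum_eq_single i]
      · simp [diagonal_apply_eq]
      · intro j _ hj; simp [diagonal_apply_ne _ (Ne.symm hj)]
      · simp
    rw [h1]
    have h2 : ((diagonal d - M) i i) ^ 2 ≤ ∑ j, ((diagonal d - M) i j) ^ 2 :=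
      Finset.single_le_sum (f := fun j => ((diagonal d - M) i j) ^ 2)
        (fun j _ => sq_nonneg _) (Finset.mem_univ i)
    refine le_trans ?_ h2
    have hii : (diagonal d - M) i i = d i - M i i := by simp [Matrix.sub_apply]
    rw [hii]
    rcases le_total ε (d i) with h | h
    · rw [max_eq_right h]; simp [sq_nonneg]
    · rw [max_eq_left h]
      have hm := hdiag i
      nlinarith [mul_nonneg (sub_nonneg.2 hm) (sub_nonneg.2 h)]
  exact Finset.sum_le_sum fun i _ => key i
end
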